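/- The cycle graph C_{3n} has exactly n partitions of its vertex set into 3 connected pieces of size n each (up to labeling of the pieces), and for any two such partitions P, P', there is no pair of pieces of P whose union equals the union of some pair of pieces of P' unless P = P'. Consequently, the ReCom move (merging two adjacent pieces and resplitting the merged region into two connected pieces of size n) cannot transform any balanced 3-partition of C_{3n} into a different balanced 3-partition. -/

import Mathlib

set_option maxHeartbeats 1000000


open SimpleGraph Finset

/-- A balanced 3-partition of the cycle `C_{3n}`: a partition of the vertex set into 3
parts, each of size `n` and each inducing a connected subgraph of the cycle. -/
def IsBalanced3Partition (n : ℕ)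
    (P : Finpartition (Finset.univ : Finset (Fin (3 * n)))) : Prop :=
  P.parts.card = 3 ∧ ∀ s ∈ P.parts, s.card = n ∧
    ((SimpleGraph.cycleGraph (3 * n)).induce (↑s : Set (Fin (3 * n)))).Connected

open Fin.NatCast Fin.CommRing

section
variable {m : ℕ} [NeZero m]

lemma val_one_of (hm : 2 ≤ m) : (1 : Fin m).val = 1 := by
  rcases m with _ | _ | m
  · omega
  · omega
  · rfl

lemma adj_succ (hm : 2 ≤ m) (x : Fin m) : (cycleGraph m).Adj x (x + 1) := by
  rw [cycleGraph_adj']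
  right
  simp only [add_sub_cancel_left]
  exact val_one_of hm

def arcF (a : Fin m) (k : ℕ) : Finset (Fin m) :=
  (Finset.range k).image (fun i : ℕ => a + (i : Fin m))

lemma mem_arcF' {a x : Fin m} {k : ℕ} : x ∈ arcF a k ↔ ∃ i < k, x = a + (i : Fin m) := by
  simp only [arcF, mem_image, mem_range]
  constructor
  · rintro ⟨i, hi, rfl⟩; exact ⟨i, hi, rfl⟩
  · rintro ⟨i, hi, rfl⟩; exact ⟨i, hi, rfl⟩

lemma card_arcF (a : Fin m) {k : ℕ} (hk : k ≤ m) : (arcF a k).card = k := by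
  rw [arcF, Finset.card_image_of_injOn, Finset.card_range]
  intro i hi j hj hij
  simp only [mem_coe, mem_range] at hi hj
  have h2 : (i : Fin m) = (j : Fin m) := add_left_cancel hij
  have := congrArg Fin.val h2
  rwa [Fin.val_cast_of_lt (lt_of_lt_of_le hi hk), Fin.val_cast_of_lt (lt_of_lt_of_le hj hk)] at this

lemma self_mem_arcF {a : Fin m} {k : ℕ} (hk : 1 ≤ k) : a ∈ arcF a k :=
  mem_arcF'.2 ⟨0, by omega, by simp⟩

lemma arcF_inj {a b : Fin m} {k : ℕ} (hk1 : 1 ≤ k) (h2k : 2 * k ≤ m)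
    (h : arcF a k = arcF b k) : a = b := by
  have ha : a ∈ arcF b k := h ▸ self_mem_arcF hk1
  have hb : b ∈ arcF a k := h.symm ▸ self_mem_arcF hk1
  obtain ⟨i, hi, hia⟩ := mem_arcF'.1 ha
  obtain ⟨j, hj, hjb⟩ := mem_arcF'.1 hb
  -- a = b + i, b = a + j  ⇒ a = a + j + i ⇒ (j + i : Fin m) = 0 ⇒ j + i = 0 mod m
  have h0 : ((j + i : ℕ) : Fin m) = 0 := by
    have : a = a + ((j : Fin m) + (i : Fin m)) := by rw [← add_assoc, ← hjb, ← hia]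
    have h2 := (left_eq_add).mp this
    rwa [Nat.cast_add]
  have := congrArg Fin.val h0
  rw [Fin.val_cast_of_lt (by omega), Fin.val_zero] at this
  have hj0 : j = 0 := by omega
  rw [hj0] at hjb
  simpa using hjb.symm

-- disjointness of shifted arcs
lemma arcF_shift_disjoint (a : Fin m) {c d k : ℕ} (hcd : c + k ≤ d) (hdm : d + k ≤ m) :
    Disjoint (arcF (a + (c : Fin m)) k) (arcF (a + (d : Fin m)) k) := by
  rw [Finset.disjoint_left]
  intro x hx hx'
  obtain ⟨i, hi, hia⟩ := mem_arcF'.1 hx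
  obtain ⟨j, hj, hjb⟩ := mem_arcF'.1 hx'
  have : ((c + i : ℕ) : Fin m) = ((d + j : ℕ) : Fin m) := by
    push_cast
    have h1 : a + ((c : Fin m) + (i : Fin m)) = a + ((d : Fin m) + (j : Fin m)) := by
      rw [← add_assoc, ← add_assoc, ← hia, ← hjb]
    exact add_left_cancel h1
  have := congrArg Fin.val this
  rw [Fin.val_cast_of_lt (by omega), Fin.val_cast_of_lt (by omega)] at this
  omega
lemma mem_arcF {a x : Fin m} {k : ℕ} (hk : k ≤ m) :
    x ∈ arcF a k ↔ (x - a).val < k := by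
  simp only [arcF, mem_image, mem_range]
  constructor
  · rintro ⟨i, hi, rfl⟩
    simpa [Fin.val_cast_of_lt (lt_of_lt_of_le hi hk)] using hi
  · intro h
    exact ⟨(x - a).val, h, by simp⟩

lemma sub_one_val {d : Fin m} {i : ℕ} (hm : 2 ≤ m) (hd : d.val = i + 1) :
    (d - 1).val = i := by
  rw [Fin.sub_def]
  simp only [val_one_of hm, hd]
  rw [show (m - 1) + (i + 1) = i + m by omega, Nat.add_mod_right, Nat.mod_eq_of_lt (by omega)]

lemma add_one_val {d : Fin m} {i : ℕ} (hm : 2 ≤ m) (hd : d.val = i) (hi : i + 1 < m) :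
    (d + 1).val = i + 1 := by
  rw [Fin.add_def]
  simp only [val_one_of hm, hd]
  exact Nat.mod_eq_of_lt hi

lemma arcF_connected (hm : 2 ≤ m) (a : Fin m) {k : ℕ} (hk1 : 1 ≤ k) (hk : k ≤ m) :
    ((cycleGraph m).induce (↑(arcF a k) : Set (Fin m))).Connected := by
  have ha : a ∈ arcF a k := (mem_arcF hk).2 (by simp; omega)
  rw [connected_iff]
  refine ⟨?_, ⟨⟨a, ha⟩⟩⟩
  have key : ∀ i : ℕ, ∀ x : Fin m, ∀ hx : x ∈ arcF a k, (x - a).val = i →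
      ((cycleGraph m).induce (↑(arcF a k) : Set (Fin m))).Reachable ⟨a, ha⟩ ⟨x, hx⟩ := by
    intro i
    induction i with
    | zero =>
      intro x hx h0
      have hxa : x = a := by
        have : x - a = 0 := Fin.ext h0
        have := sub_eq_zero.mp this
        exact this
      subst hxa
      exact Reachable.refl _
    | succ i ih =>
      intro x hx h
      have hyval : (x - 1 - a).val = i := by
        have : x - 1 - a = (x - a) - 1 := by ring
        rw [this]
        exact sub_one_val hm h
      have hy : x - 1 ∈ arcF a k := (mem_arcF hk).2 (by rw [hyval]; have := (mem_arcF hk).1 hx; omega)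
      have adj : ((cycleGraph m).induce (↑(arcF a k) : Set (Fin m))).Adj ⟨x - 1, hy⟩ ⟨x, hx⟩ := by
        show (cycleGraph m).Adj (x - 1) x
        have hx1 : x = (x - 1) + 1 := by ring
        nth_rewrite 2 [hx1]
        exact adj_succ hm (x - 1)
      exact (ih (x - 1) hy hyval).trans adj.reachable
  intro u v
  exact ((key _ u.val u.property rfl).symm.trans (key _ v.val v.property rfl))
-- every connected subset of size k (1 ≤ k < m) is an arc
lemma connected_eq_arcF (hm : 2 ≤ m) {k : ℕ} (hk1 : 1 ≤ k) (hk : k < m)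
    {s : Finset (Fin m)} (hcard : s.card = k)
    (hconn : ((cycleGraph m).induce (↑s : Set (Fin m))).Connected) :
    ∃ a : Fin m, s = arcF a k := by
  -- find a ∈ s with a - 1 ∉ s
  have hne : s.Nonempty := Finset.card_pos.mp (by omega)
  obtain ⟨c, hc⟩ := hne
  have hcompl : ∃ b : Fin m, b ∉ s := by
    by_contra h
    push_neg at h
    have : s = Finset.univ := Finset.eq_univ_iff_forall.2 h
    rw [this, Finset.card_univ, Fintype.card_fin] at hcard
    omega
  obtain ⟨b, hb⟩ := hcompl
  have hexa : ∃ a : Fin m, a ∈ s ∧ a - 1 ∉ s := by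
    have hex : ∃ t : ℕ, b + ((t + 1 : ℕ) : Fin m) ∈ s := by
      refine ⟨(c - b).val - 1, ?_⟩
      have hbc : c ≠ b := fun h => hb (h ▸ hc)
      have : (c - b).val ≠ 0 := by
        intro h0
        exact hbc (sub_eq_zero.mp (Fin.ext h0))
      rw [show (c - b).val - 1 + 1 = (c - b).val by omega]
      simpa using hc
    classical
    let j := Nat.find hex
    refine ⟨b + ((j + 1 : ℕ) : Fin m), Nat.find_spec hex, ?_⟩
    have h1 : b + ((j + 1 : ℕ) : Fin m) - 1 = b + ((j : ℕ) : Fin m) := by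
      push_cast
      ring
    rw [h1]
    rcases Nat.eq_zero_or_pos j with h0 | hpos
    · rw [h0]; simpa using hb
    · have := Nat.find_min hex (m := j - 1) (by omega)
      rwa [show j - 1 + 1 = j by omega] at this
  obtain ⟨a, haS, hpred⟩ := hexa
  -- key claim: for x ∈ s, arcF a ((x - a).val + 1) ⊆ s
  have key' : ∀ (u v : (↑(↑s : Set (Fin m)) : Type))
      (w : ((cycleGraph m).induce (↑s : Set (Fin m))).Walk u v),
      v = ⟨a, haS⟩ → arcF a ((u.val - a).val + 1) ⊆ s := by
    intro u v w
    induction w with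
    | nil =>
      intro hv
      subst hv
      intro z hz
      rw [mem_arcF (by omega)] at hz
      simp only [sub_self, Fin.val_zero] at hz
      have : z - a = 0 := by
        have : (z - a).val = 0 := by omega
        exact Fin.ext this
      rw [sub_eq_zero.mp this]
      exact haS
    | cons h p ih =>
      rename_i u y v'
      intro hv
      have hIH0 := ih hv
      have hy : (y : Fin m) ∈ s := y.property
      have hu : (u : Fin m) ∈ s := u.property
      have hadj : (cycleGraph m).Adj u.val y.val := h
      rw [cycleGraph_adj'] at hadj
      rcases hadj with h1 | h1
      · -- (u - y).val = 1, so u = y + 1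
        have huy : (u : Fin m) = y.val + 1 := by
          have : (u.val - y.val) = 1 := Fin.ext (by rw [h1, val_one_of hm])
          have := sub_eq_iff_eq_add.mp this
          rw [this]; ring
        have hneg : ((0 : Fin m) - 1).val = m - 1 := by
          rw [Fin.sub_def, val_one_of hm]
          simp only [Fin.val_zero, Nat.add_zero]
          exact Nat.mod_eq_of_lt (by omega)
        have hyne : (y.val - a).val ≠ m - 1 := by
          intro hvv
          have h2 : y.val - a = (0 : Fin m) - 1 := Fin.ext (by rw [hvv, hneg])
          have h3 : y.val = (0 : Fin m) - 1 + a := sub_eq_iff_eq_add.mp h2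
          have h4 : y.val = a - 1 := by rw [h3]; ring
          exact hpred (h4 ▸ hy)
        have hval : (u.val - a).val = (y.val - a).val + 1 := by
          have : u.val - a = (y.val - a) + 1 := by rw [huy]; ring
          rw [this]
          exact add_one_val hm rfl (by have := (y.val - a).isLt; omega)
        intro z hz
        rw [mem_arcF (by have := (u.val - a).isLt; omega)] at hz
        rw [hval] at hz
        rcases Nat.lt_succ_iff_lt_or_eq.mp hz with hlt | heq
        · exact hIH0 ((mem_arcF (by have := (y.val - a).isLt; omega)).2 hlt)
        · have : z = u.val := by
            have h2 : z - a = u.val - a := Fin.ext (by rw [heq, hval])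
            have := congrArg (· + a) h2
            simpa using this
          rw [this]; exact hu
      · -- (y - u).val = 1, so y = u + 1, u = y - 1
        have huy : (u : Fin m) = y.val - 1 := by
          have : (y.val - u.val) = 1 := Fin.ext (by rw [h1, val_one_of hm])
          have := sub_eq_iff_eq_add.mp this
          rw [this]; ring
        by_cases h0 : (y.val - a).val = 0
        · -- y = a, u = a - 1 ∈ s contradiction
          exfalso
          have h2 : y.val - a = 0 := Fin.ext h0
          have h3 : y.val = a := by
            have := sub_eq_iff_eq_add.mp h2
            simpa using this
          rw [h3] at huy
          exact hpred (huy ▸ hu)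
        · have hval : (u.val - a).val = (y.val - a).val - 1 := by
            have heq2 : u.val - a = (y.val - a) - 1 := by rw [huy]; ring
            rw [heq2]
            exact sub_one_val hm (by omega)
          refine subset_trans ?_ hIH0
          apply Finset.image_subset_image
          apply Finset.range_subset_range.2
          omega
  have key : ∀ x ∈ s, arcF a ((x - a).val + 1) ⊆ s := by
    intro x hx
    obtain ⟨w⟩ := hconn.preconnected ⟨x, hx⟩ ⟨a, haS⟩
    exact key' _ _ w rfl
  -- conclude s ⊆ arcF a k
  have hsub : s ⊆ arcF a k := by
    intro x hx
    rw [mem_arcF (le_of_lt hk)]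
    by_contra hge
    push_neg at hge
    have := Finset.card_le_card (key x hx)
    rw [card_arcF a (by have := (x - a).isLt; omega), hcard] at this
    omega
  exact ⟨a, Finset.eq_of_subset_of_card_le hsub (by rw [card_arcF a (le_of_lt hk), hcard])⟩
end

section
variable {n : ℕ} [NeZero (3 * n)]

def triParts (n : ℕ) [NeZero (3 * n)] (a : Fin (3 * n)) : Finset (Finset (Fin (3 * n))) :=
  {arcF a n, arcF (a + ((n : ℕ) : Fin (3 * n))) n, arcF (a + ((2 * n : ℕ) : Fin (3 * n))) n}

lemma add_zero_cast (a : Fin (3 * n)) : a = a + ((0 : ℕ) : Fin (3 * n)) := by simp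

lemma disj01 (hn : 1 ≤ n) (a : Fin (3 * n)) :
    Disjoint (arcF a n) (arcF (a + ((n : ℕ) : Fin (3 * n))) n) := by
  nth_rewrite 1 [add_zero_cast a]
  exact arcF_shift_disjoint a (by omega) (by omega)

lemma disj02 (hn : 1 ≤ n) (a : Fin (3 * n)) :
    Disjoint (arcF a n) (arcF (a + ((2 * n : ℕ) : Fin (3 * n))) n) := by
  nth_rewrite 1 [add_zero_cast a]
  exact arcF_shift_disjoint a (by omega) (by omega)

lemma disj12 (hn : 1 ≤ n) (a : Fin (3 * n)) :
    Disjoint (arcF (a + ((n : ℕ) : Fin (3 * n))) n)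
      (arcF (a + ((2 * n : ℕ) : Fin (3 * n))) n) :=
  arcF_shift_disjoint a (by omega) (by omega)

lemma arcF_ne_of_disjoint (hn : 1 ≤ n) {a b : Fin (3 * n)}
    (h : Disjoint (arcF a n) (arcF b n)) : arcF a n ≠ arcF b n := by
  intro he
  have := Finset.disjoint_left.1 h (self_mem_arcF hn) (he ▸ self_mem_arcF hn)
  exact this

lemma ne01 (hn : 1 ≤ n) (a : Fin (3 * n)) :
    arcF a n ≠ arcF (a + ((n : ℕ) : Fin (3 * n))) n := arcF_ne_of_disjoint hn (disj01 hn a)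

lemma ne02 (hn : 1 ≤ n) (a : Fin (3 * n)) :
    arcF a n ≠ arcF (a + ((2 * n : ℕ) : Fin (3 * n))) n := arcF_ne_of_disjoint hn (disj02 hn a)

lemma ne12 (hn : 1 ≤ n) (a : Fin (3 * n)) :
    arcF (a + ((n : ℕ) : Fin (3 * n))) n ≠ arcF (a + ((2 * n : ℕ) : Fin (3 * n))) n :=
  arcF_ne_of_disjoint hn (disj12 hn a)

lemma triParts_card (hn : 1 ≤ n) (a : Fin (3 * n)) : (triParts n a).card = 3 := by
  rw [triParts, Finset.card_insert_of_notMem, Finset.card_insert_of_notMem,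
    Finset.card_singleton]
  · simp only [Finset.mem_singleton]
    exact ne12 hn a
  · simp only [Finset.mem_insert, Finset.mem_singleton]
    push_neg
    exact ⟨ne01 hn a, ne02 hn a⟩

lemma triParts_sup (hn : 1 ≤ n) (a : Fin (3 * n)) :
    (triParts n a).sup id = (univ : Finset (Fin (3 * n))) := by
  rw [triParts, Finset.sup_insert, Finset.sup_insert, Finset.sup_singleton]
  simp only [id]
  apply Finset.eq_univ_of_card
  show (arcF a n ∪ (arcF (a + ((n : ℕ) : Fin (3 * n))) n ∪
    arcF (a + ((2 * n : ℕ) : Fin (3 * n))) n)).card = _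
  rw [← Finset.union_assoc]
  rw [Finset.card_union_of_disjoint, Finset.card_union_of_disjoint (disj01 hn a)]
  · rw [card_arcF _ (by omega), card_arcF _ (by omega), card_arcF _ (by omega),
      Fintype.card_fin]
    omega
  · rw [Finset.disjoint_union_left]
    exact ⟨disj02 hn a, disj12 hn a⟩

lemma arcF_nonempty (hn : 1 ≤ n) (a : Fin (3 * n)) : (arcF a n).Nonempty :=
  ⟨a, self_mem_arcF hn⟩

def triP (n : ℕ) [NeZero (3 * n)] (hn : 1 ≤ n) (a : Fin (3 * n)) :
    Finpartition (univ : Finset (Fin (3 * n))) where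
  parts := triParts n a
  supIndep := by
    rw [Finset.supIndep_iff_pairwiseDisjoint]
    intro u hu v hv huv
    simp only [triParts, Finset.coe_insert, Set.mem_insert_iff, Finset.coe_singleton,
      Set.mem_singleton_iff] at hu hv
    rcases hu with rfl | rfl | rfl <;> rcases hv with rfl | rfl | rfl <;>
      first
        | exact absurd rfl huv
        | exact disj01 hn a
        | exact disj02 hn a
        | exact disj12 hn a
        | exact (disj01 hn a).symm
        | exact (disj02 hn a).symm
        | exact (disj12 hn a).symm
  sup_parts := triParts_sup hn a
  bot_notMem := by
    simp only [triParts, Finset.bot_eq_empty, Finset.mem_insert, Finset.mem_singleton]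
    push_neg
    refine ⟨?_, ?_, ?_⟩ <;>
      · intro h
        exact Finset.not_nonempty_empty (h ▸ arcF_nonempty hn _)

@[simp] lemma triP_parts (hn : 1 ≤ n) (a : Fin (3 * n)) : (triP n hn a).parts = triParts n a := rfl
end

section
variable {n : ℕ} [NeZero (3 * n)]

lemma shift_nn (a : Fin (3 * n)) :
    (a + ((n : ℕ) : Fin (3 * n))) + ((n : ℕ) : Fin (3 * n)) = a + ((2 * n : ℕ) : Fin (3 * n)) := by
  push_cast
  ring

lemma cast3n : ((3 * n : ℕ) : Fin (3 * n)) = 0 := by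
  exact_mod_cast Fin.natCast_self (3 * n)

lemma shift_2nn (a : Fin (3 * n)) :
    (a + ((2 * n : ℕ) : Fin (3 * n))) + ((n : ℕ) : Fin (3 * n)) = a := by
  have h : (a + ((2 * n : ℕ) : Fin (3 * n))) + ((n : ℕ) : Fin (3 * n))
      = a + ((3 * n : ℕ) : Fin (3 * n)) := by
    push_cast
    ring
  rw [h, cast3n, add_zero]

lemma shift_n2n (a : Fin (3 * n)) :
    (a + ((n : ℕ) : Fin (3 * n))) + ((2 * n : ℕ) : Fin (3 * n)) = a := by
  rw [add_assoc, add_comm ((n : ℕ) : Fin (3 * n)), ← add_assoc, shift_2nn]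

lemma triParts_shift (a : Fin (3 * n)) :
    triParts n (a + ((n : ℕ) : Fin (3 * n))) = triParts n a := by
  unfold triParts
  rw [shift_nn, shift_n2n]
  ext x
  simp only [Finset.mem_insert, Finset.mem_singleton]
  tauto

lemma balanced_parts (hn : 1 ≤ n) (P : Finpartition (univ : Finset (Fin (3 * n))))
    (h3 : P.parts.card = 3)
    (hprt : ∀ s ∈ P.parts, s.card = n ∧
      ((cycleGraph (3 * n)).induce (↑s : Set (Fin (3 * n)))).Connected) :
    ∃ a, P.parts = triParts n a := by
  have hm : 2 ≤ 3 * n := by omega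
  -- first part
  obtain ⟨s, hs⟩ : P.parts.Nonempty := Finset.card_pos.mp (by omega)
  obtain ⟨a, rfl⟩ : ∃ a, s = arcF a n :=
    connected_eq_arcF hm hn (by omega) (hprt s hs).1 (hprt s hs).2
  set s := arcF a n with hsdef
  -- the vertex after s
  set v := a + ((n : ℕ) : Fin (3 * n)) with hvdef
  have hva : v ∉ s := by
    rw [hsdef]
    intro hvin
    obtain ⟨i, hi, hiv⟩ := mem_arcF'.1 hvin
    have : ((n : ℕ) : Fin (3 * n)) = ((i : ℕ) : Fin (3 * n)) := add_left_cancel (hvdef ▸ hiv)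
    have := congrArg Fin.val this
    rw [Fin.val_cast_of_lt (by omega), Fin.val_cast_of_lt (by omega)] at this
    omega
  obtain ⟨t, ht, hvt⟩ := P.exists_mem (Finset.mem_univ v)
  have hts : t ≠ s := fun h => hva (h ▸ hvt)
  obtain ⟨b, rfl⟩ : ∃ b, t = arcF b n :=
    connected_eq_arcF hm hn (by omega) (hprt t ht).1 (hprt t ht).2
  set t := arcF b n with htdef
  obtain ⟨i, hi, hvi⟩ := mem_arcF'.1 (htdef ▸ hvt)
  have hi0 : i = 0 := by
    by_contra hi0
    have hw : a + ((n - 1 : ℕ) : Fin (3 * n)) = b + ((i - 1 : ℕ) : Fin (3 * n)) := by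
      have h := hvi
      rw [hvdef] at h
      push_cast [Nat.cast_sub (by omega : 1 ≤ i), Nat.cast_sub (by omega : 1 ≤ n)]
      linear_combination h
    have hw1 : a + ((n - 1 : ℕ) : Fin (3 * n)) ∈ s :=
      mem_arcF'.2 ⟨n - 1, by omega, rfl⟩
    have hw2 : a + ((n - 1 : ℕ) : Fin (3 * n)) ∈ t :=
      mem_arcF'.2 ⟨i - 1, by omega, hw⟩
    have hdisj : Disjoint t s :=
      P.disjoint (Finset.mem_coe.mpr ht) (Finset.mem_coe.mpr hs) hts
    exact Finset.disjoint_left.1 hdisj hw2 hw1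
  have htb : t = arcF v n := by
    rw [hi0] at hvi
    simp only [Nat.cast_zero, add_zero] at hvi
    rw [htdef, hvi]
  -- the third part
  have hts' : (arcF b n) ≠ s := hts
  have htmem : t ∈ P.parts.erase s := Finset.mem_erase.2 ⟨hts, ht⟩
  have hcardE : ((P.parts.erase s).erase t).card = 1 := by
    rw [Finset.card_erase_of_mem htmem, Finset.card_erase_of_mem hs, h3]
  obtain ⟨u, hE⟩ := Finset.card_eq_one.1 hcardE
  have huE : u ∈ (P.parts.erase s).erase t := hE ▸ Finset.mem_singleton_self u
  have hut : u ≠ t := (Finset.mem_erase.1 huE).1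
  have hus : u ≠ s := (Finset.mem_erase.1 (Finset.mem_erase.1 huE).2).1
  have hu : u ∈ P.parts := (Finset.mem_erase.1 (Finset.mem_erase.1 huE).2).2
  have hstu : ({s, t, u} : Finset (Finset (Fin (3 * n)))) = P.parts := by
    apply Finset.eq_of_subset_of_card_le
    · intro x hx
      simp only [Finset.mem_insert, Finset.mem_singleton] at hx
      rcases hx with rfl | rfl | rfl
      · exact hs
      · exact ht
      · exact hu
    · rw [h3]
      rw [Finset.card_insert_of_notMem, Finset.card_insert_of_notMem, Finset.card_singleton]
      · simp only [Finset.mem_singleton]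
        exact hut.symm
      · simp only [Finset.mem_insert, Finset.mem_singleton]
        push_neg
        exact ⟨Ne.symm hts, hus.symm⟩
  -- u is the complement of s ∪ t
  have hcover : ∀ x : Fin (3 * n), x ∈ s ∨ x ∈ t ∨ x ∈ u := by
    intro x
    obtain ⟨p, hp, hxp⟩ := P.exists_mem (Finset.mem_univ x)
    rw [← hstu] at hp
    simp only [Finset.mem_insert, Finset.mem_singleton] at hp
    rcases hp with rfl | rfl | rfl
    · exact Or.inl hxp
    · exact Or.inr (Or.inl hxp)
    · exact Or.inr (Or.inr hxp)
  have hu_eq : u = univ \ (s ∪ t) := by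
    ext x
    simp only [Finset.mem_sdiff, Finset.mem_univ, true_and, Finset.mem_union]
    constructor
    · intro hx
      push_neg
      refine ⟨?_, ?_⟩
      · exact fun hxs => Finset.disjoint_left.1
          (P.disjoint (Finset.mem_coe.mpr hu) (Finset.mem_coe.mpr hs) hus) hx hxs
      · exact fun hxt => Finset.disjoint_left.1
          (P.disjoint (Finset.mem_coe.mpr hu) (Finset.mem_coe.mpr ht) hut) hx hxt
    · intro hx
      rcases hcover x with h | h | h
      · exact absurd h (by tauto)
      · exact absurd h (by tauto)
      · exact h
  have harc2 : arcF (a + ((2 * n : ℕ) : Fin (3 * n))) n = univ \ (s ∪ t) := by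
    apply Finset.eq_of_subset_of_card_le
    · intro x hx
      simp only [Finset.mem_sdiff, Finset.mem_univ, true_and, Finset.mem_union]
      push_neg
      refine ⟨?_, ?_⟩
      · exact fun hxs => Finset.disjoint_left.1 (disj02 hn a).symm hx hxs
      · intro hxt
        rw [htb, hvdef] at hxt
        exact Finset.disjoint_left.1 (disj12 hn a).symm hx hxt
    · have hcst : (s ∪ t).card = 2 * n := by
        rw [hsdef, htb, hvdef, Finset.card_union_of_disjoint (disj01 hn a),
          card_arcF _ (by omega), card_arcF _ (by omega)]
        ring
      rw [Finset.card_sdiff_of_subset (Finset.subset_univ _), hcst, Finset.card_univ, Fintype.card_fin,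
        card_arcF _ (by omega)]
      omega
  refine ⟨a, ?_⟩
  rw [← hstu, hu_eq, ← harc2, htb, hvdef, hsdef]
  rfl

end

section
variable {n : ℕ} [NeZero (3 * n)]

lemma val_add_cast {m : ℕ} [NeZero m] (b : Fin m) (c : ℕ) (h1 : c < m) (h2 : b.val + c < m) :
    (b + (c : Fin m)).val = b.val + c := by
  rw [Fin.add_def, Fin.val_cast_of_lt h1]
  exact Nat.mod_eq_of_lt h2

lemma triParts_shift2 (a : Fin (3 * n)) :
    triParts n (a + ((2 * n : ℕ) : Fin (3 * n))) = triParts n a := by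
  rw [← shift_nn, triParts_shift, triParts_shift]

lemma mem_triParts {a : Fin (3 * n)} {u : Finset (Fin (3 * n))} (hu : u ∈ triParts n a) :
    u = arcF a n ∨ u = arcF (a + ((n : ℕ) : Fin (3 * n))) n ∨
      u = arcF (a + ((2 * n : ℕ) : Fin (3 * n))) n := by
  simpa [triParts, Finset.mem_insert, Finset.mem_singleton] using hu

lemma part_triParts {a : Fin (3 * n)} {u : Finset (Fin (3 * n))} (hu : u ∈ triParts n a) :
    ∃ c, u = arcF c n ∧ triParts n a = triParts n c := by
  rcases mem_triParts hu with rfl | rfl | rfl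
  · exact ⟨a, rfl, rfl⟩
  · exact ⟨_, rfl, (triParts_shift a).symm⟩
  · exact ⟨_, rfl, (triParts_shift2 a).symm⟩

lemma triParts_inj (hn : 1 ≤ n) {a b : Fin (3 * n)}
    (hab : arcF a n ∈ triParts n b) (ha : a.val < n) (hb : b.val < n) : a = b := by
  rcases mem_triParts hab with h | h | h
  · exact arcF_inj hn (by omega) h
  · have := arcF_inj hn (by omega) h
    have hv := congrArg Fin.val this
    rw [val_add_cast b n (by omega) (by omega)] at hv
    omega
  · have := arcF_inj hn (by omega) h
    have hv := congrArg Fin.val this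
    rw [val_add_cast b (2 * n) (by omega) (by omega)] at hv
    omega

lemma triParts_reduce (hn : 1 ≤ n) (a : Fin (3 * n)) :
    ∃ j : Fin n, triParts n a = triParts n ⟨j.val, by have := j.isLt; omega⟩ := by
  have ha := a.isLt
  have hq : a.val / n < 3 := Nat.div_lt_of_lt_mul (by omega)
  have hr : a.val % n < n := Nat.mod_lt _ (by omega)
  set b : Fin (3 * n) := ⟨a.val % n, by omega⟩ with hbdef
  refine ⟨⟨a.val % n, hr⟩, ?_⟩
  have hdm : n * (a.val / n) + a.val % n = a.val := Nat.div_add_mod a.val n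
  have key : ∀ q : ℕ, q < 3 → a.val = b.val + q * n →
      triParts n a = triParts n b := by
    intro q hq3 heq
    have hab : a = b + ((q * n : ℕ) : Fin (3 * n)) := by
      apply Fin.ext
      rw [val_add_cast b (q * n) (by omega) (by omega), ← heq]
    interval_cases q
    · rw [hab]
      simp
    · rw [hab]
      rw [show ((1 * n : ℕ) : Fin (3 * n)) = ((n : ℕ) : Fin (3 * n)) by norm_num]
      exact triParts_shift b
    · rw [hab]
      exact triParts_shift2 b
  refine key (a.val / n) hq ?_
  have hbv : b.val = a.val % n := rfl
  rw [hbv, Nat.mul_comm (a.val / n) n]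
  omega

end

section
variable {n : ℕ} [NeZero (3 * n)]

lemma third_part {α : Type*} [Fintype α] [DecidableEq α]
    (P : Finpartition (univ : Finset α)) (h3 : P.parts.card = 3)
    {s t : Finset α} (hs : s ∈ P.parts) (ht : t ∈ P.parts) (hst : s ≠ t) :
    univ \ (s ∪ t) ∈ P.parts := by
  have htmem : t ∈ P.parts.erase s := Finset.mem_erase.2 ⟨hst.symm, ht⟩
  have hcardE : ((P.parts.erase s).erase t).card = 1 := by
    rw [Finset.card_erase_of_mem htmem, Finset.card_erase_of_mem hs, h3]
  obtain ⟨u, hE⟩ := Finset.card_eq_one.1 hcardE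
  have huE : u ∈ (P.parts.erase s).erase t := hE ▸ Finset.mem_singleton_self u
  have hut : u ≠ t := (Finset.mem_erase.1 huE).1
  have hus : u ≠ s := (Finset.mem_erase.1 (Finset.mem_erase.1 huE).2).1
  have hu : u ∈ P.parts := (Finset.mem_erase.1 (Finset.mem_erase.1 huE).2).2
  have hstu : ({s, t, u} : Finset (Finset α)) = P.parts := by
    apply Finset.eq_of_subset_of_card_le
    · intro x hx
      simp only [Finset.mem_insert, Finset.mem_singleton] at hx
      rcases hx with rfl | rfl | rfl
      · exact hs
      · exact ht
      · exact hu
    · rw [h3]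
      rw [Finset.card_insert_of_notMem, Finset.card_insert_of_notMem, Finset.card_singleton]
      · simp only [Finset.mem_singleton]
        exact hut.symm
      · simp only [Finset.mem_insert, Finset.mem_singleton]
        push_neg
        exact ⟨hst, hus.symm⟩
  have hcover : ∀ x : α, x ∈ s ∨ x ∈ t ∨ x ∈ u := by
    intro x
    obtain ⟨p, hp, hxp⟩ := P.exists_mem (Finset.mem_univ x)
    rw [← hstu] at hp
    simp only [Finset.mem_insert, Finset.mem_singleton] at hp
    rcases hp with rfl | rfl | rfl
    · exact Or.inl hxp
    · exact Or.inr (Or.inl hxp)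
    · exact Or.inr (Or.inr hxp)
  have hu_eq : u = univ \ (s ∪ t) := by
    ext x
    simp only [Finset.mem_sdiff, Finset.mem_univ, true_and, Finset.mem_union]
    constructor
    · intro hx
      push_neg
      refine ⟨?_, ?_⟩
      · exact fun hxs => Finset.disjoint_left.1
          (P.disjoint (Finset.mem_coe.mpr hu) (Finset.mem_coe.mpr hs) hus) hx hxs
      · exact fun hxt => Finset.disjoint_left.1
          (P.disjoint (Finset.mem_coe.mpr hu) (Finset.mem_coe.mpr ht) hut) hx hxt
    · intro hx
      rcases hcover x with h | h | h
      · exact absurd h (by tauto)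
      · exact absurd h (by tauto)
      · exact h
  exact hu_eq ▸ hu
end

/-- The cycle `C_{3n}` has exactly `n` balanced 3-partitions (up to
labeling of the pieces); for any two balanced 3-partitions `P, P'`, no pair of pieces
of `P` has union equal to the union of a pair of pieces of `P'` unless `P = P'`; and
consequently a ReCom move (merging two pieces and resplitting their union into two
connected pieces of size `n`) cannot transform a balanced 3-partition into a different
one: any balanced 3-partition sharing a piece with `P` equals `P`. -/
theorem cycle_recom_frozen (n : ℕ) (hn : 1 ≤ n) :
    Set.ncard {P : Finpartition (Finset.univ : Finset (Fin (3 * n))) |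
        IsBalanced3Partition n P} = n ∧
    (∀ P P' : Finpartition (Finset.univ : Finset (Fin (3 * n))),
      IsBalanced3Partition n P → IsBalanced3Partition n P' →
      ∀ s ∈ P.parts, ∀ t ∈ P.parts, s ≠ t →
      ∀ s' ∈ P'.parts, ∀ t' ∈ P'.parts, s' ≠ t' →
      s ∪ t = s' ∪ t' → P = P') ∧
    (∀ P P' : Finpartition (Finset.univ : Finset (Fin (3 * n))),
      IsBalanced3Partition n P → IsBalanced3Partition n P' →
      ∀ u ∈ P.parts, u ∈ P'.parts → P = P') := by
  haveI : NeZero (3 * n) := ⟨by omega⟩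
  set f : Fin n → Finpartition (Finset.univ : Finset (Fin (3 * n))) :=
    fun j => triP n hn ⟨j.val, by have := j.isLt; omega⟩ with hf
  have hbal : ∀ j, IsBalanced3Partition n (f j) := by
    intro j
    refine ⟨triParts_card hn _, ?_⟩
    intro s hs
    obtain ⟨c, rfl, -⟩ := part_triParts hs
    exact ⟨card_arcF _ (by omega), arcF_connected (by omega) c hn (by omega)⟩
  have hsurj : ∀ P, IsBalanced3Partition n P → ∃ j, P = f j := by
    intro P hP
    obtain ⟨a, hPa⟩ := balanced_parts hn P hP.1 hP.2
    obtain ⟨j, hj⟩ := triParts_reduce hn a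
    exact ⟨j, Finpartition.ext (by rw [hPa, hj]; rfl)⟩
  have hshared : ∀ P P' : Finpartition (Finset.univ : Finset (Fin (3 * n))),
      IsBalanced3Partition n P → IsBalanced3Partition n P' →
      ∀ u ∈ P.parts, u ∈ P'.parts → P = P' := by
    intro P P' hP hP' u hu hu'
    obtain ⟨a, hPa⟩ := balanced_parts hn P hP.1 hP.2
    obtain ⟨a', hPa'⟩ := balanced_parts hn P' hP'.1 hP'.2
    obtain ⟨c, hc, hac⟩ := part_triParts (hPa ▸ hu)
    obtain ⟨c', hc', hac'⟩ := part_triParts (hPa' ▸ hu')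
    have hcc : c = c' := arcF_inj hn (by omega) (hc.symm.trans hc')
    apply Finpartition.ext
    rw [hPa, hPa', hac, hac', hcc]
  refine ⟨?_, ?_, hshared⟩
  · have hinj : Function.Injective f := by
      intro i j hij
      have hparts : triParts n (⟨i.val, by have := i.isLt; omega⟩ : Fin (3 * n)) =
          triParts n (⟨j.val, by have := j.isLt; omega⟩ : Fin (3 * n)) :=
        congrArg Finpartition.parts hij
      have hmem : arcF (⟨i.val, by have := i.isLt; omega⟩ : Fin (3 * n)) n ∈
          triParts n (⟨j.val, by have := j.isLt; omega⟩ : Fin (3 * n)) := by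
        rw [← hparts]
        exact Finset.mem_insert_self _ _
      have := triParts_inj hn hmem (by have := i.isLt; simpa using this)
        (by have := j.isLt; simpa using this)
      have hv := congrArg Fin.val this
      exact Fin.ext (by simpa using hv)
    have hSeq : {P : Finpartition (Finset.univ : Finset (Fin (3 * n))) |
        IsBalanced3Partition n P} = Set.range f := by
      ext P
      simp only [Set.mem_setOf_eq, Set.mem_range]
      constructor
      · intro h
        obtain ⟨j, hj⟩ := hsurj P h
        exact ⟨j, hj.symm⟩
      · rintro ⟨j, rfl⟩
        exact hbal j
    rw [hSeq, ← Set.image_univ, Set.ncard_image_of_injective _ hinj, Set.ncard_univ]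
    simp
  · intro P P' hP hP' s hs t ht hst s' hs' t' ht' hst' huni
    have hu := third_part P hP.1 hs ht hst
    have hu' := third_part P' hP'.1 hs' ht' hst'
    rw [huni] at hu
    exact hshared P P' hP hP' _ hu hu'
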